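/- Let the primal problem min_x Σᵢ₌₁^k hᵢ(x) + ½‖x − x₀‖² have finite value α and (unique) minimizer x*. For any dual point z ∈ X^k with dual value F(z) := −Σᵢ hᵢ*(zᵢ) − ½‖Σᵢ zᵢ‖² + ⟨x₀, Σᵢ zᵢ⟩ ≥ F₀ for some fixed F₀ ∈ ℝ, the vector v := Σᵢ zᵢ satisfies ½‖x₀ − x* − v‖² ≤ α − F₀; hence the sums Σᵢ zᵢ over any set of dual iterates with nondecreasing dual values are uniformly bounded. -/
import Mathlib

open RealInnerProductSpace Filter Topology

/-- Fenchel conjugate of an extended-real-valued function on a real inner product space. -/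
noncomputable def fenchelConj {X : Type*} [NormedAddCommGroup X] [InnerProductSpace ℝ X]
    (f : X → EReal) (z : X) : EReal :=
  ⨆ x : X, ((⟪z, x⟫ : ℝ) : EReal) - f x

/-- A proper function: not identically `⊤` and never `⊥`. -/
def ProperFn {X : Type*} (f : X → EReal) : Prop :=
  (∃ x, f x ≠ ⊤) ∧ ∀ x, f x ≠ ⊥

/-- Convexity for extended-real-valued functions. -/
def ConvexFnE {X : Type*} [AddCommGroup X] [Module ℝ X] (f : X → EReal) : Prop :=
  ∀ x y : X, ∀ t : ℝ, 0 < t → t < 1 →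
    f (t • x + (1 - t) • y) ≤ (t : EReal) * f x + ((1 - t : ℝ) : EReal) * f y

/-- `z` is a subgradient of `f` at `x`. -/
def IsSubgrad {X : Type*} [NormedAddCommGroup X] [InnerProductSpace ℝ X]
    (f : X → EReal) (x z : X) : Prop :=
  ∀ y : X, f x + ((⟪z, y - x⟫ : ℝ) : EReal) ≤ f y

lemma ereal_sum_ne_bot {ι : Type*} (s : Finset ι) (f : ι → EReal)
    (hf : ∀ i ∈ s, f i ≠ ⊥) : (∑ i ∈ s, f i) ≠ ⊥ := by
  classical
  induction s using Finset.cons_induction with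
  | empty => simp
  | cons a s ha ih =>
    rw [Finset.sum_cons, Ne, EReal.add_eq_bot_iff]
    push_neg
    exact ⟨hf a (Finset.mem_cons_self a s),
      ih (fun i hi => hf i (Finset.mem_cons_of_mem hi))⟩

lemma ereal_coe_sum {ι : Type*} (s : Finset ι) (f : ι → ℝ) :
    ((∑ i ∈ s, f i : ℝ) : EReal) = ∑ i ∈ s, ((f i : ℝ) : EReal) := by
  classical
  induction s using Finset.cons_induction with
  | empty => simp
  | cons a s ha ih => rw [Finset.sum_cons, Finset.sum_cons, EReal.coe_add, ih]

theorem stmt17 {X : Type*} [NormedAddCommGroup X] [InnerProductSpace ℝ X] [FiniteDimensional ℝ X]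
    (k : ℕ) (h : Fin k → X → EReal) (hp : ∀ i, ProperFn (h i))
    (hl : ∀ i, LowerSemicontinuous (h i)) (hc : ∀ i, ConvexFnE (h i))
    (x₀ xstar : X) (α F₀ : ℝ)
    (hval : (∑ i, h i xstar) + ((((1:ℝ)/2) * ‖xstar - x₀‖^2 : ℝ) : EReal) = (α : EReal))
    (hlb : ∀ x : X, (α : EReal) ≤ (∑ i, h i x) + ((((1:ℝ)/2) * ‖x - x₀‖^2 : ℝ) : EReal))
    (z : Fin k → X)
    (hF : (F₀ : EReal) ≤
      -(∑ i, fenchelConj (h i) (z i)) - ((((1:ℝ)/2) * ‖∑ i, z i‖^2 : ℝ) : EReal)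
        + ((⟪x₀, ∑ i, z i⟫ : ℝ) : EReal)) :
    ((1:ℝ)/2) * ‖x₀ - xstar - ∑ i, z i‖^2 ≤ α - F₀ := by
  set v := ∑ i, z i with hv
  have hbot : ∀ i, h i xstar ≠ ⊥ := fun i => (hp i).2 _
  have hsum_ne_top : (∑ i, h i xstar) ≠ ⊤ := by
    intro H
    rw [H, EReal.top_add_of_ne_bot (EReal.coe_ne_bot _)] at hval
    exact EReal.top_ne_coe _ hval
  have hsum_ne_bot : (∑ i, h i xstar) ≠ ⊥ :=
    ereal_sum_ne_bot _ _ (fun i _ => hbot i)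
  have htop : ∀ i, h i xstar ≠ ⊤ := by
    intro i H
    apply hsum_ne_top
    rw [← Finset.add_sum_erase Finset.univ (fun j => h j xstar) (Finset.mem_univ i)]
    rw [H, EReal.top_add_of_ne_bot
      (ereal_sum_ne_bot _ _ (fun j _ => hbot j))]
  set c : Fin k → ℝ := fun i => (h i xstar).toReal with hc'
  have hcoe : ∀ i, ((c i : ℝ) : EReal) = h i xstar := fun i =>
    EReal.coe_toReal (htop i) (hbot i)
  have hsum_eq : (∑ i, h i xstar) = ((∑ i, c i : ℝ) : EReal) := by
    rw [ereal_coe_sum]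
    exact Finset.sum_congr rfl (fun i _ => (hcoe i).symm)
  have hcsum : (∑ i, c i) + ((1:ℝ)/2) * ‖xstar - x₀‖^2 = α := by
    rw [hsum_eq, ← EReal.coe_add] at hval
    exact_mod_cast hval
  have hconj_ge : ∀ i, ((⟪z i, xstar⟫ - c i : ℝ) : EReal) ≤ fenchelConj (h i) (z i) := by
    intro i
    have := le_iSup (fun x : X => ((⟪z i, x⟫ : ℝ) : EReal) - h i x) xstar
    rw [← hcoe i] at this
    rw [EReal.coe_sub]
    exact this
  set S := ∑ i, fenchelConj (h i) (z i) with hS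
  have hS_ge : ((⟪v, xstar⟫ - ∑ i, c i : ℝ) : EReal) ≤ S := by
    have h1 : ((∑ i, (⟪z i, xstar⟫ - c i) : ℝ) : EReal) ≤ S := by
      rw [ereal_coe_sum]
      exact Finset.sum_le_sum (fun i _ => hconj_ge i)
    rwa [Finset.sum_sub_distrib, ← sum_inner] at h1
  have hS_ne_bot : S ≠ ⊥ := by
    intro H
    rw [H, le_bot_iff] at hS_ge
    exact EReal.coe_ne_bot _ hS_ge
  have hS_ne_top : S ≠ ⊤ := by
    intro H
    rw [H] at hF
    simp at hF
  set s := S.toReal with hs'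
  have hScoe : ((s : ℝ) : EReal) = S := EReal.coe_toReal hS_ne_top hS_ne_bot
  rw [← hScoe] at hF hS_ge
  have hF' : F₀ ≤ -s - ((1:ℝ)/2) * ‖v‖^2 + ⟪x₀, v⟫ := by
    rw [show (-(s:EReal) - ((((1:ℝ)/2) * ‖v‖^2 : ℝ):EReal) + ((⟪x₀, v⟫ : ℝ):EReal))
        = ((-s - ((1:ℝ)/2) * ‖v‖^2 + ⟪x₀, v⟫ : ℝ) : EReal) by push_cast; ring] at hF
    exact_mod_cast hF
  have hs_ge : ⟪v, xstar⟫ - ∑ i, c i ≤ s := by exact_mod_cast hS_ge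
  have hexp : ‖x₀ - xstar - v‖^2
      = ‖xstar - x₀‖^2 - 2*(⟪x₀, v⟫ - ⟪v, xstar⟫) + ‖v‖^2 := by
    have e1 := @norm_sub_sq_real X _ _ (x₀ - xstar) v
    have e2 : ⟪x₀ - xstar, v⟫ = ⟪x₀, v⟫ - ⟪v, xstar⟫ := by
      rw [inner_sub_left, real_inner_comm v xstar]
    have e3 : ‖x₀ - xstar‖ = ‖xstar - x₀‖ := norm_sub_rev _ _
    rw [e1, e2, e3]
  nlinarith [hexp, hF', hs_ge, hcsum]
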